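/- For every rational s and rationals a, b, if x^2 + ax + b divides P_s(x) in ℚ[x], then b^2 + u(s,a)·b + v(s,a) = 0, and if additionally L(s,a) ≠ 0, then F(s,a) = 0; consequently, for each fixed rational s with L(s,a) ≠ 0 for all rational roots candidates, the quadratic-factor locus of P_s embeds into the affine rational points of the curve F(s,a) = 0. -/
import Mathlib


noncomputable section
open Polynomial

def uu (s a : ℚ) : ℚ :=
  -3*a^2 + (12 - 4*s^2 - 2*s)*a + (-s^4 + 14*s^3 - 4*s^2 - 10*s - 1)

def vv (s a : ℚ) : ℚ :=
  a^4 + (2*s^2 + s - 6)*a^3 + (s^4 - 14*s^3 + 4*s^2 + 10*s + 1)*a^2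
    + (s^5 + 10*s^4 + 4*s^3 - 14*s^2 + s)*a + (-6*s^5 + s^4 + 2*s^3)

def mm (s a : ℚ) : ℚ := -2*a - 2*s^2 - s + 6

def nn (s a : ℚ) : ℚ :=
  a^3 + (2*s^2 + s - 6)*a^2 + (s^4 - 14*s^3 + 4*s^2 + 10*s + 1)*a
    + (s^5 + 10*s^4 + 4*s^3 - 14*s^2 + s)

def LL (s a : ℚ) : ℚ := nn s a - mm s a * uu s a

def CC (s a : ℚ) : ℚ := mm s a * vv s a + s^5

def FF (s a : ℚ) : ℚ :=
  CC s a ^ 2 + uu s a * LL s a * CC s a + vv s a * LL s a ^ 2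

def Ppoly (s : ℚ) : Polynomial ℚ :=
  X^5 + C ((2 + s) * (3 - 2*s)) * X^4
    + C (1 + 10*s + 4*s^2 - 14*s^3 + s^4) * X^3
    - C (s * (1 - 14*s + 4*s^2 + 10*s^3 + s^4)) * X^2
    - C (s^3 * (1 + 2*s) * (-2 + 3*s)) * X
    - C (s^5)

theorem stmt19 (s a b : ℚ)
    (hdvd : (X^2 + C a * X + C b) ∣ Ppoly s) :
    b^2 + uu s a * b + vv s a = 0 ∧ (LL s a ≠ 0 → FF s a = 0) := by
  set c2 : ℚ := (2 + s) * (3 - 2*s) - a with hc2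
  set c1 : ℚ := (1 + 10*s + 4*s^2 - 14*s^3 + s^4) - b - a * c2 with hc1
  set c0 : ℚ := (-(s * (1 - 14*s + 4*s^2 + 10*s^3 + s^4))) - a * c1 - b * c2 with hc0
  set r1 : ℚ := (-(s^3 * (1 + 2*s) * (-2 + 3*s))) - a * c0 - b * c1 with hr1def
  set r0 : ℚ := (-(s^5)) - b * c0 with hr0def
  have hid : Ppoly s
      = (X^2 + C a * X + C b) * (X^3 + C c2 * X^2 + C c1 * X + C c0)
        + (C r1 * X + C r0) := by
    rw [hr1def, hr0def, hc0, hc1, hc2]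
    simp only [Ppoly, map_add, map_sub, map_mul, map_pow, map_neg, map_one, map_ofNat]
    ring
  have hdvd2 : (X^2 + C a * X + C b) ∣ (C r1 * X + C r0) := by
    have := dvd_sub hdvd (Dvd.intro _ rfl :
      (X^2 + C a * X + C b) ∣ (X^2 + C a * X + C b) * (X^3 + C c2 * X^2 + C c1 * X + C c0))
    rwa [hid, add_sub_cancel_left] at this
  have hdeg : (X^2 + C a * X + C b : Polynomial ℚ).degree = 2 := by
    compute_degree!
  have hz : (C r1 * X + C r0 : Polynomial ℚ) = 0 := by
    refine Polynomial.eq_zero_of_dvd_of_degree_lt hdvd2 ?_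
    rw [hdeg]
    exact lt_of_le_of_lt (Polynomial.degree_linear_le) (by norm_num)
  have hr1 : r1 = 0 := by
    have := congrArg (fun p => Polynomial.coeff p 1) hz
    simpa using this
  have hr0 : r0 = 0 := by
    have := congrArg (fun p => Polynomial.coeff p 0) hz
    simpa using this
  rw [hr1def, hc0, hc1, hc2] at hr1
  rw [hr0def, hc0, hc1, hc2] at hr0
  have hQ : b^2 + uu s a * b + vv s a = 0 := by
    simp only [uu, vv]
    linear_combination hr1
  have hT : LL s a * b - CC s a = 0 := by
    simp only [LL, _root_.CC, uu, vv, mm, nn]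
    linear_combination (-(-2*a - 2*s^2 - s + 6)) * hr1 + hr0
  refine ⟨hQ, fun _ => ?_⟩
  have hF : FF s a = LL s a ^ 2 * (b^2 + uu s a * b + vv s a)
      - (LL s a * b - CC s a) * (LL s a * b + CC s a + uu s a * LL s a) := by
    simp only [FF]; ring
  rw [hF, hQ, hT]; ring
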